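/- Let C be a weakly compact convex subset of a Banach space E, S a commutative semigroup, {T(t) : t ∈ S} a semigroup of nonexpansive mappings on C (T(s+t) = T(s)∘T(t)), X a suitable invariant subspace of B(S) containing all functions t ↦ f(T(t)x) for f ∈ E*, and μ an invariant mean on X. If z ∈ C satisfies T_μ z = z, then ‖T(s)z − z‖ ≤ limsup_{t ∈ S} ‖T(t)z − z‖ for every s ∈ S. -/

import Mathlib

open BoundedContinuousFunction
/-- The `{0,1}`-valued real indicator of a set, as an element of `B(S)`
(`S` carries the discrete topology, so `B(S)` is the space of bounded
continuous functions `S →ᵇ ℝ`). -/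
noncomputable def indBCF {S : Type*} [TopologicalSpace S] [DiscreteTopology S] (A : Set S) :
    S →ᵇ ℝ :=
  BoundedContinuousFunction.ofNormedAddCommGroup (A.indicator 1)
    continuous_of_discreteTopology 1
    (fun x => by by_cases h : x ∈ A <;> simp [Set.indicator_apply, h])

/-- The translate `(ℓ_s a)(t) = a (s + t)` as an element of `B(S)`. -/
noncomputable def transBCF {S : Type*} [AddSemigroup S] [TopologicalSpace S] [DiscreteTopology S]
    (s : S) (a : S →ᵇ ℝ) : S →ᵇ ℝ :=
  a.compContinuous ⟨fun t => s + t, continuous_of_discreteTopology⟩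

/-- Let `C` be a weakly compact convex subset of a Banach space `E`,
`{T(t) : t ∈ S}` a commutative semigroup of nonexpansive mappings on `C`,
`X` a translation-invariant subspace of `B(S)` containing the constants and all
orbit functions `t ↦ f(T(t)x)`, and `μ` an invariant mean on `X`
(a mean: `inf_t a(t) ≤ μ(a) ≤ sup_t a(t)` for all `a ∈ X`).
If `z ∈ C` satisfies `T_μ z = z` (i.e. `μ_t(f(T(t)z)) = f(z)` for all `f ∈ E*`),
then `‖T(s)z - z‖ ≤ limsup_{t ∈ S} ‖T(t)z - z‖` for every `s ∈ S`, the limsup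
over the directed set `S` being `⨅ s₀, ⨆ t ≥ s₀`. -/
theorem stmt7 {S E : Type*} [AddCommSemigroup S] [TopologicalSpace S] [DiscreteTopology S]
    [NormedAddCommGroup E] [NormedSpace ℝ E] [CompleteSpace E]
    (C : Set E) (hconv : Convex ℝ C)
    (hwcpt : IsCompact ((toWeakSpace ℝ E) '' C))
    (T : S → E → E)
    (hmaps : ∀ t, Set.MapsTo (T t) C C)
    (hne : ∀ t, ∀ x ∈ C, ∀ y ∈ C, ‖T t x - T t y‖ ≤ ‖x - y‖)
    (hsg : ∀ s t : S, ∀ x ∈ C, T (s + t) x = T s (T t x))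
    (X : Subspace ℝ (S →ᵇ ℝ)) (hX1 : (1 : S →ᵇ ℝ) ∈ X)
    (hXinv : ∀ a ∈ X, ∀ s : S, transBCF s a ∈ X)
    (hXorb : ∀ x ∈ C, ∀ f : E →L[ℝ] ℝ, ∃ a ∈ X, ∀ t : S, a t = f (T t x))
    (μ : ↥X →L[ℝ] ℝ)
    (hμmean : ∀ a : ↥X, (⨅ t : S, (a : S →ᵇ ℝ) t) ≤ μ a ∧ μ a ≤ ⨆ t : S, (a : S →ᵇ ℝ) t)
    (hμinv : ∀ (a : ↥X) (s : S), μ ⟨transBCF s a.1, hXinv a.1 a.2 s⟩ = μ a)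
    (z : E) (hzC : z ∈ C)
    (hfix : ∀ (f : E →L[ℝ] ℝ) (a : S →ᵇ ℝ) (ha : a ∈ X),
      (∀ t : S, a t = f (T t z)) → μ ⟨a, ha⟩ = f z)
    (s : S) :
    ‖T s z - z‖ ≤ ⨅ s₀ : S, ⨆ t : {t : S // s₀ = t ∨ ∃ u, s₀ + u = t}, ‖T t.1 z - z‖ := by
  classical
  have hSne : Nonempty S := ⟨s⟩
  -- C is norm-bounded (weakly compact ⇒ bounded, via Banach–Steinhaus)
  have hbound : ∃ M : ℝ, ∀ x ∈ C, ‖x‖ ≤ M := by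
    rcases C.eq_empty_or_nonempty with hC | hC
    · exact ⟨0, fun x hx => by simp [hC] at hx⟩
    have hpt : ∀ f : StrongDual ℝ E, ∃ Cf : ℝ, ∀ i : C,
        ‖NormedSpace.inclusionInDoubleDual ℝ E i.1 f‖ ≤ Cf := by
      intro f
      have hc : Continuous fun w : WeakSpace ℝ E => f w :=
        WeakBilin.eval_continuous (topDualPairing ℝ E).flip f
      have hcpt : IsCompact ((fun w : WeakSpace ℝ E => f w) '' ((toWeakSpace ℝ E) '' C)) :=
        hwcpt.image hc
      obtain ⟨r, hr⟩ := hcpt.isBounded.subset_closedBall 0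
      refine ⟨r, fun i => ?_⟩
      have hmem : (fun w : WeakSpace ℝ E => f w) (toWeakSpace ℝ E i.1) ∈
          (fun w : WeakSpace ℝ E => f w) '' ((toWeakSpace ℝ E) '' C) :=
        Set.mem_image_of_mem _ (Set.mem_image_of_mem _ i.2)
      have := hr hmem
      rw [Metric.mem_closedBall, Real.dist_eq, sub_zero] at this
      have this : |f i.1| ≤ r := this
      simpa [NormedSpace.inclusionInDoubleDual, Real.norm_eq_abs] using this
    obtain ⟨M0, hM0⟩ :=
      banach_steinhaus (g := fun i : C => NormedSpace.inclusionInDoubleDual ℝ E i.1) hpt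
    refine ⟨max M0 0, fun x hx => ?_⟩
    refine NormedSpace.norm_le_dual_bound ℝ x (le_max_right _ _) fun f => ?_
    have h1 : ‖f x‖ = ‖NormedSpace.inclusionInDoubleDual ℝ E x f‖ := rfl
    calc ‖f x‖ = ‖NormedSpace.inclusionInDoubleDual ℝ E x f‖ := h1
      _ ≤ ‖NormedSpace.inclusionInDoubleDual ℝ E x‖ * ‖f‖ :=
          ContinuousLinearMap.le_opNorm _ _
      _ ≤ M0 * ‖f‖ := by
          exact mul_le_mul_of_nonneg_right (hM0 ⟨x, hx⟩) (norm_nonneg f)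
      _ ≤ max M0 0 * ‖f‖ :=
          mul_le_mul_of_nonneg_right (le_max_left _ _) (norm_nonneg f)
  obtain ⟨M, hM⟩ := hbound
  have hnb : ∀ t : S, ‖T t z - z‖ ≤ M + M := fun t =>
    (norm_sub_le _ _).trans (add_le_add (hM _ (hmaps t hzC)) (hM _ hzC))
  have hbdd : ∀ s₀ : S,
      BddAbove (Set.range fun t : {t : S // s₀ = t ∨ ∃ u, s₀ + u = t} => ‖T t.1 z - z‖) :=
    fun s₀ => ⟨M + M, by rintro _ ⟨t, rfl⟩; exact hnb t.1⟩
  have hsupnn : ∀ s₀ : S,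
      (0 : ℝ) ≤ ⨆ t : {t : S // s₀ = t ∨ ∃ u, s₀ + u = t}, ‖T t.1 z - z‖ := fun s₀ =>
    (norm_nonneg _).trans (le_ciSup (hbdd s₀) ⟨s₀, Or.inl rfl⟩)
  refine le_ciInf fun s₀ => ?_
  by_cases hz : T s z = z
  · rw [hz, sub_self, norm_zero]; exact hsupnn s₀
  -- norming functional
  obtain ⟨f, hf1, hfx⟩ := exists_dual_vector ℝ (T s z - z) (norm_ne_zero_iff.mpr (sub_ne_zero.mpr hz))
  obtain ⟨b, hbX, hb⟩ := hXorb z hzC f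
  have hμb : μ ⟨b, hbX⟩ = f z := hfix f b hbX hb
  have hμ1 : μ ⟨1, hX1⟩ = 1 := by
    have h := hμmean ⟨1, hX1⟩
    have h1 : (⨅ t : S, ((⟨(1 : S →ᵇ ℝ), hX1⟩ : ↥X) : S →ᵇ ℝ) t) = 1 := by
      simp [ciInf_const]
    have h2 : (⨆ t : S, ((⟨(1 : S →ᵇ ℝ), hX1⟩ : ↥X) : S →ᵇ ℝ) t) = 1 := by
      simp [ciSup_const]
    rw [h1] at h; rw [h2] at h
    linarith [h.1, h.2]
  set c : S →ᵇ ℝ := f (T s z) • (1 : S →ᵇ ℝ) - transBCF s b with hcdef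
  have hc : c ∈ X := X.sub_mem (X.smul_mem _ hX1) (hXinv b hbX s)
  have hcval : ∀ u : S, c u = f (T s z) - f (T (s + u) z) := by
    intro u
    have : (transBCF s b) u = b (s + u) := rfl
    simp [hcdef, this, hb (s + u)]
  have hceq : (⟨c, hc⟩ : ↥X) =
      f (T s z) • (⟨(1 : S →ᵇ ℝ), hX1⟩ : ↥X) - ⟨transBCF s b, hXinv b hbX s⟩ := rfl
  have hμtrans : μ ⟨transBCF s b, hXinv b hbX s⟩ = μ ⟨b, hbX⟩ := hμinv ⟨b, hbX⟩ s
  have hfx' : f (T s z - z) = ‖T s z - z‖ := by exact_mod_cast hfx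
  have hμc : μ ⟨c, hc⟩ = ‖T s z - z‖ := by
    have hms : μ (f (T s z) • (⟨(1 : S →ᵇ ℝ), hX1⟩ : ↥X) - ⟨transBCF s b, hXinv b hbX s⟩) =
        μ (f (T s z) • (⟨(1 : S →ᵇ ℝ), hX1⟩ : ↥X)) - μ ⟨transBCF s b, hXinv b hbX s⟩ :=
      map_sub μ _ _
    have hsm : μ (f (T s z) • (⟨(1 : S →ᵇ ℝ), hX1⟩ : ↥X)) =
        f (T s z) • μ (⟨(1 : S →ᵇ ℝ), hX1⟩ : ↥X) := map_smul μ _ _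
    rw [hceq, hms, hsm, hμ1, hμtrans, hμb]
    have h5 : f (T s z) • (1 : ℝ) - f z = f (T s z - z) := by
      rw [smul_eq_mul, mul_one, map_sub]
    rw [h5, hfx']
  -- pointwise bound for the translate of c
  have hkey : ∀ t : S, (transBCF s₀ c) t ≤
      ⨆ t : {t : S // s₀ = t ∨ ∃ u, s₀ + u = t}, ‖T t.1 z - z‖ := by
    intro t
    have h1 : (transBCF s₀ c) t = c (s₀ + t) := rfl
    have h2 : c (s₀ + t) ≤ ‖T (s₀ + t) z - z‖ := by
      rw [hcval (s₀ + t)]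
      have h3 : f (T s z) - f (T (s + (s₀ + t)) z) = f (T s z - T s (T (s₀ + t) z)) := by
        rw [map_sub, hsg s (s₀ + t) z hzC]
      rw [h3]
      calc f (T s z - T s (T (s₀ + t) z)) ≤ ‖f (T s z - T s (T (s₀ + t) z))‖ :=
            le_abs_self _
        _ ≤ ‖f‖ * ‖T s z - T s (T (s₀ + t) z)‖ := ContinuousLinearMap.le_opNorm _ _
        _ = ‖T s z - T s (T (s₀ + t) z)‖ := by rw [hf1, one_mul]
        _ ≤ ‖z - T (s₀ + t) z‖ := hne s z hzC _ (hmaps _ hzC)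
        _ = ‖T (s₀ + t) z - z‖ := norm_sub_rev _ _
    have h4 : ‖T (s₀ + t) z - z‖ ≤
        ⨆ t : {t : S // s₀ = t ∨ ∃ u, s₀ + u = t}, ‖T t.1 z - z‖ :=
      le_ciSup (hbdd s₀) ⟨s₀ + t, Or.inr ⟨t, rfl⟩⟩
    rw [h1]; exact h2.trans h4
  calc ‖T s z - z‖ = μ ⟨c, hc⟩ := hμc.symm
    _ = μ ⟨transBCF s₀ c, hXinv c hc s₀⟩ := (hμinv ⟨c, hc⟩ s₀).symm
    _ ≤ ⨆ t : S, (transBCF s₀ c) t := (hμmean _).2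
    _ ≤ ⨆ t : {t : S // s₀ = t ∨ ∃ u, s₀ + u = t}, ‖T t.1 z - z‖ :=
        Real.iSup_le hkey (hsupnn s₀)
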